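/- arXiv:1902.06677 — 4 statements merged into one kernel-verified Lean document; each statement's English description precedes it below -/
import Mathlib

section
/- Let a ≠ 0 be real, and for x, x' > 0 and y ∈ (0, π) set z = x² + x'² − 2·x·x'·cos y. If φ : ℝ→ℝ is twice differentiable on (0,∞) and ψ(y,x) = φ(z), then x²·∂²ψ/∂x² + x·∂ψ/∂x − a²·x²·ψ + ∂²ψ/∂y² = 4x²·( z·φ''(z) + φ'(z) − (a²/4)·φ(z) ). -/
open Real Set

theorem stmt_0 (a x' : ℝ) (ha : a ≠ 0) (hx' : 0 < x')
    (φ φ' φ'' : ℝ → ℝ)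
    (hφ : ∀ z ∈ Ioi (0:ℝ), HasDerivAt φ (φ' z) z)
    (hφ' : ∀ z ∈ Ioi (0:ℝ), HasDerivAt φ' (φ'' z) z)
    (x y : ℝ) (hx : 0 < x) (hy : y ∈ Ioo 0 π) :
    let ψ : ℝ → ℝ → ℝ := fun y x => φ (x ^ 2 + x' ^ 2 - 2 * x * x' * Real.cos y)
    let z : ℝ := x ^ 2 + x' ^ 2 - 2 * x * x' * Real.cos y
    x ^ 2 * deriv (deriv (fun x => ψ y x)) x + x * deriv (fun x => ψ y x) x
      - a ^ 2 * x ^ 2 * ψ y x + deriv (deriv (fun y => ψ y x)) y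
      = 4 * x ^ 2 * (z * φ'' z + φ' z - (a ^ 2 / 4) * φ z) := by
  intro ψ z
  obtain ⟨hy0, hyπ⟩ := hy
  have hS : 0 < Real.sin y := Real.sin_pos_of_pos_of_lt_pi hy0 hyπ
  -- positivity of the argument, as a function of the first variable
  have hzpos : ∀ t : ℝ, (0:ℝ) < t ^ 2 + x' ^ 2 - 2 * t * x' * Real.cos y := by
    intro t
    have h := Real.sin_sq_add_cos_sq y
    nlinarith [sq_nonneg (t - x' * Real.cos y), pow_pos (mul_pos hx' hS) 2]
  -- positivity of the argument, as a function of the angle, on (0, π)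
  have hzpos' : ∀ s ∈ Ioo (0:ℝ) π, (0:ℝ) < x ^ 2 + x' ^ 2 - 2 * x * x' * Real.cos s := by
    intro s hs
    have hSs : 0 < Real.sin s := Real.sin_pos_of_pos_of_lt_pi hs.1 hs.2
    have h := Real.sin_sq_add_cos_sq s
    nlinarith [sq_nonneg (x - x' * Real.cos s), pow_pos (mul_pos hx' hSs) 2]
  -- derivative of the inner function in x
  have hux : ∀ t : ℝ, HasDerivAt (fun t : ℝ => t ^ 2 + x' ^ 2 - 2 * t * x' * Real.cos y)
      (2 * t - 2 * x' * Real.cos y) t := by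
    intro t
    have h1 : HasDerivAt (fun t : ℝ => t ^ 2 + x' ^ 2 - t * (2 * x' * Real.cos y))
        (2 * t - 1 * (2 * x' * Real.cos y)) t := by
      have hp : HasDerivAt (fun t : ℝ => t ^ 2) (2 * t) t := by
        simpa using hasDerivAt_pow 2 t
      exact (hp.add_const (x' ^ 2)).sub ((hasDerivAt_id t).mul_const (2 * x' * Real.cos y))
    have hfun : (fun t : ℝ => t ^ 2 + x' ^ 2 - 2 * t * x' * Real.cos y)
        = (fun t : ℝ => t ^ 2 + x' ^ 2 - t * (2 * x' * Real.cos y)) := by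
      funext s; ring
    rw [hfun]
    convert h1 using 1; ring
  -- derivative of the inner function in y
  have huy : ∀ s : ℝ, HasDerivAt (fun s : ℝ => x ^ 2 + x' ^ 2 - 2 * x * x' * Real.cos s)
      (2 * x * x' * Real.sin s) s := by
    intro s
    have hc : HasDerivAt (fun s : ℝ => 2 * x * x' * Real.cos s)
        (2 * x * x' * (-Real.sin s)) s := (Real.hasDerivAt_cos s).const_mul (2 * x * x')
    have := hc.const_sub (x ^ 2 + x' ^ 2)
    rw [show (2 * x * x' * Real.sin s) = -(2 * x * x' * -Real.sin s) by ring]; exact this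
  -- first derivative in x
  have hdx : ∀ t : ℝ, HasDerivAt (fun t : ℝ => ψ y t)
      (φ' (t ^ 2 + x' ^ 2 - 2 * t * x' * Real.cos y) * (2 * t - 2 * x' * Real.cos y)) t :=
    fun t => (hφ _ (hzpos t)).comp t (hux t)
  have hdx1 : deriv (fun t : ℝ => ψ y t)
      = fun t : ℝ => φ' (t ^ 2 + x' ^ 2 - 2 * t * x' * Real.cos y) * (2 * t - 2 * x' * Real.cos y) := by
    funext t; exact (hdx t).deriv
  -- second derivative in x
  have hlin : HasDerivAt (fun t : ℝ => 2 * t - 2 * x' * Real.cos y) 2 x := by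
    have := ((hasDerivAt_id x).const_mul 2).sub_const (2 * x' * Real.cos y)
    simpa using this
  have hdx2 : HasDerivAt
      (fun t : ℝ => φ' (t ^ 2 + x' ^ 2 - 2 * t * x' * Real.cos y) * (2 * t - 2 * x' * Real.cos y))
      (φ'' z * (2 * x - 2 * x' * Real.cos y) * (2 * x - 2 * x' * Real.cos y)
        + φ' z * 2) x := by
    exact ((hφ' _ (hzpos x)).comp x (hux x)).mul hlin
  -- derivatives in y
  have hdy : ∀ s ∈ Ioo (0:ℝ) π, HasDerivAt (fun s : ℝ => ψ s x)
      (φ' (x ^ 2 + x' ^ 2 - 2 * x * x' * Real.cos s) * (2 * x * x' * Real.sin s)) s :=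
    fun s hs => (hφ _ (hzpos' s hs)).comp s (huy s)
  have hev : deriv (fun s : ℝ => ψ s x) =ᶠ[nhds y]
      fun s : ℝ => φ' (x ^ 2 + x' ^ 2 - 2 * x * x' * Real.cos s) * (2 * x * x' * Real.sin s) := by
    filter_upwards [Ioo_mem_nhds hy0 hyπ] with s hs
    exact (hdy s hs).deriv
  have hsin : HasDerivAt (fun s : ℝ => 2 * x * x' * Real.sin s) (2 * x * x' * Real.cos y) y :=
    (Real.hasDerivAt_sin y).const_mul (2 * x * x')
  have hdy2 : HasDerivAt
      (fun s : ℝ => φ' (x ^ 2 + x' ^ 2 - 2 * x * x' * Real.cos s) * (2 * x * x' * Real.sin s))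
      (φ'' z * (2 * x * x' * Real.sin y) * (2 * x * x' * Real.sin y)
        + φ' z * (2 * x * x' * Real.cos y)) y :=
    ((hφ' _ (hzpos' y ⟨hy0, hyπ⟩)).comp y (huy y)).mul hsin
  have e1 : deriv (deriv (fun t : ℝ => ψ y t)) x
      = φ'' z * (2 * x - 2 * x' * Real.cos y) * (2 * x - 2 * x' * Real.cos y) + φ' z * 2 := by
    rw [hdx1]; exact hdx2.deriv
  have e2 : deriv (fun t : ℝ => ψ y t) x = φ' z * (2 * x - 2 * x' * Real.cos y) := (hdx x).deriv
  have e3 : deriv (deriv (fun s : ℝ => ψ s x)) y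
      = φ'' z * (2 * x * x' * Real.sin y) * (2 * x * x' * Real.sin y)
        + φ' z * (2 * x * x' * Real.cos y) := by
    rw [hev.deriv_eq]; exact hdy2.deriv
  have e4 : ψ y x = φ z := rfl
  have hzdef : z = x ^ 2 + x' ^ 2 - 2 * x * x' * Real.cos y := rfl
  rw [e1, e2, e3, e4, hzdef]
  have hpyth := Real.sin_sq_add_cos_sq y
  linear_combination (4 * x ^ 2 * x' ^ 2 * φ'' (x ^ 2 + x' ^ 2 - 2 * x * x' * Real.cos y)) * hpyth
end

section
/- Define K_0(z) = ∫_0^∞ e^{−z·cosh t} dt for z > 0, and let φ(z) = K_0(√z) for z > 0. Then φ satisfies the Lommel-type equation z·φ''(z) + φ'(z) − (1/4)·φ(z) = 0 for all z > 0. -/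
open Real Set MeasureTheory

/-- The modified Bessel function of the second kind of order 0. -/
noncomputable def besselK0 (z : ℝ) : ℝ :=
  ∫ t in Ioi (0:ℝ), Real.exp (-z * Real.cosh t)

open Filter Topology

noncomputable def besselK0₁ (s : ℝ) : ℝ :=
  ∫ t in Ioi (0:ℝ), Real.cosh t * Real.exp (-s * Real.cosh t)

noncomputable def besselK0₂ (s : ℝ) : ℝ :=
  ∫ t in Ioi (0:ℝ), Real.cosh t ^ 2 * Real.exp (-s * Real.cosh t)

lemma self_le_exp_of_nonneg {x : ℝ} (hx : 0 ≤ x) : x ≤ Real.exp x :=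
  le_trans (by linarith) (Real.add_one_le_exp x)

lemma cosh_self_le {t : ℝ} (ht : 0 ≤ t) : t ≤ Real.cosh t :=
  le_trans (by simpa using Real.self_le_sinh_iff.2 ht) (Real.sinh_lt_cosh t).le

/-- key pointwise bound -/
lemma pow_cosh_exp_bound {a : ℝ} (ha : 0 < a) (n : ℕ) {t : ℝ} (ht : 0 ≤ t) :
    Real.cosh t ^ n * Real.exp (-a * Real.cosh t) ≤
      (2 * n / a) ^ n * Real.exp (-(a / 2) * t) := by
  have hc : (0:ℝ) < Real.cosh t := Real.cosh_pos t
  have hct : t ≤ Real.cosh t := cosh_self_le ht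
  have hexp : Real.exp (-(a / 2) * Real.cosh t) ≤ Real.exp (-(a / 2) * t) :=
    Real.exp_le_exp.2 (by nlinarith)
  rcases Nat.eq_zero_or_pos n with rfl | hn
  · have h0 : -a * Real.cosh t ≤ -(a / 2) * Real.cosh t := by nlinarith
    simpa using le_trans (Real.exp_le_exp.2 h0) hexp
  · have hn' : (0:ℝ) < n := by exact_mod_cast hn
    have h1 : Real.cosh t ≤ (2 * n / a) * Real.exp (a / (2 * n) * Real.cosh t) := by
      have := self_le_exp_of_nonneg (x := a / (2 * n) * Real.cosh t)
        (by positivity)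
      have h2 : (0:ℝ) < 2 * n / a := by positivity
      calc Real.cosh t = (2 * n / a) * (a / (2 * n) * Real.cosh t) := by
            field_simp
        _ ≤ (2 * n / a) * Real.exp (a / (2 * n) * Real.cosh t) := by
            exact mul_le_mul_of_nonneg_left this h2.le
    have hpow : Real.cosh t ^ n ≤ (2 * n / a) ^ n * Real.exp (a / 2 * Real.cosh t) := by
      calc Real.cosh t ^ n ≤ ((2 * n / a) * Real.exp (a / (2 * n) * Real.cosh t)) ^ n :=
            pow_le_pow_left₀ hc.le h1 n
        _ = (2 * n / a) ^ n * Real.exp (a / (2 * n) * Real.cosh t) ^ n := mul_pow _ _ _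
        _ = (2 * n / a) ^ n * Real.exp (n * (a / (2 * n) * Real.cosh t)) := by
            rw [← Real.exp_nat_mul]
        _ = (2 * n / a) ^ n * Real.exp (a / 2 * Real.cosh t) := by
            congr 2
            field_simp
    calc Real.cosh t ^ n * Real.exp (-a * Real.cosh t)
        ≤ ((2 * n / a) ^ n * Real.exp (a / 2 * Real.cosh t)) * Real.exp (-a * Real.cosh t) :=
          mul_le_mul_of_nonneg_right hpow (Real.exp_pos _).le
      _ = (2 * n / a) ^ n * Real.exp (-(a / 2) * Real.cosh t) := by
          rw [mul_assoc, ← Real.exp_add]; ring_nf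
      _ ≤ (2 * n / a) ^ n * Real.exp (-(a / 2) * t) := by
          apply mul_le_mul_of_nonneg_left hexp (by positivity)

lemma integrable_pow_cosh_exp {a : ℝ} (ha : 0 < a) (n : ℕ) :
    IntegrableOn (fun t => Real.cosh t ^ n * Real.exp (-a * Real.cosh t)) (Ioi (0:ℝ)) := by
  apply Integrable.mono' (g := fun t => (2 * n / a) ^ n * Real.exp (-(a / 2) * t))
  · exact (exp_neg_integrableOn_Ioi 0 (half_pos ha)).const_mul _
  · exact ((Real.continuous_cosh.pow n).mul
      ((Real.continuous_exp.comp (continuous_const.mul Real.continuous_cosh)))).aestronglyMeasurable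
  · filter_upwards [ae_restrict_mem measurableSet_Ioi] with t ht
    rw [Real.norm_eq_abs, abs_of_nonneg (by positivity)]
    exact pow_cosh_exp_bound ha n (le_of_lt ht)

lemma integrable_exp_cosh {a : ℝ} (ha : 0 < a) :
    IntegrableOn (fun t => Real.exp (-a * Real.cosh t)) (Ioi (0:ℝ)) := by
  simpa using integrable_pow_cosh_exp ha 0

lemma integrable_sinh_sq_exp_cosh {a : ℝ} (ha : 0 < a) :
    IntegrableOn (fun t => Real.sinh t ^ 2 * Real.exp (-a * Real.cosh t)) (Ioi (0:ℝ)) := by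
  apply Integrable.mono' (integrable_pow_cosh_exp ha 2)
  · exact ((Real.continuous_sinh.pow 2).mul
      ((Real.continuous_exp.comp (continuous_const.mul Real.continuous_cosh)))).aestronglyMeasurable
  · refine Filter.Eventually.of_forall fun t => ?_
    rw [Real.norm_eq_abs, abs_of_nonneg (by positivity)]
    have h := Real.sinh_sq t
    have : Real.sinh t ^ 2 ≤ Real.cosh t ^ 2 := by nlinarith [Real.exp_pos (-a * Real.cosh t)]
    nlinarith [Real.exp_pos (-a * Real.cosh t)]

lemma hasDerivAt_besselK0 {s : ℝ} (hs : 0 < s) :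
    HasDerivAt besselK0 (-besselK0₁ s) s := by
  have key := hasDerivAt_integral_of_dominated_loc_of_deriv_le (μ := volume.restrict (Ioi (0:ℝ)))
    (F := fun x t => Real.exp (-x * Real.cosh t))
    (F' := fun x t => Real.exp (-x * Real.cosh t) * -Real.cosh t)
    (x₀ := s) (bound := fun t => Real.cosh t * Real.exp (-(s/2) * Real.cosh t))
    (Metric.ball_mem_nhds s (half_pos hs))
    (Filter.Eventually.of_forall fun x =>
      ((Real.continuous_exp.comp (continuous_const.mul Real.continuous_cosh))).aestronglyMeasurable)
    (integrable_exp_cosh hs)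
    (((Real.continuous_exp.comp (continuous_const.mul Real.continuous_cosh)).mul
      Real.continuous_cosh.neg).aestronglyMeasurable)
    ?_ (by simpa using (integrable_pow_cosh_exp (half_pos hs) 1).integrable) ?_
  · have h2 : (∫ t in Ioi (0:ℝ), Real.exp (-s * Real.cosh t) * -Real.cosh t) = -besselK0₁ s := by
      rw [besselK0₁, ← integral_neg]
      congr 1; ext t; ring
    rw [← h2]
    exact key.2
  · filter_upwards [ae_restrict_mem measurableSet_Ioi] with t ht x hx
    have hc : (0:ℝ) < Real.cosh t := Real.cosh_pos t
    have hx2 : s/2 < x := by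
      have h := abs_lt.1 (mem_ball_iff_norm.1 hx); linarith [h.1]
    have hb : ‖Real.exp (-x * Real.cosh t) * -Real.cosh t‖
        = Real.cosh t * Real.exp (-x * Real.cosh t) := by
      rw [norm_mul, Real.norm_eq_abs, Real.norm_eq_abs, Real.abs_exp, abs_neg,
        abs_of_nonneg hc.le]; ring
    rw [hb]
    exact mul_le_mul_of_nonneg_left (Real.exp_le_exp.2 (by nlinarith)) hc.le
  · refine Filter.Eventually.of_forall fun t x _ => ?_
    exact ((hasDerivAt_neg' x).mul_const (Real.cosh t)).exp.congr_deriv (by ring)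

lemma hasDerivAt_besselK0₁ {s : ℝ} (hs : 0 < s) :
    HasDerivAt besselK0₁ (-besselK0₂ s) s := by
  have key := hasDerivAt_integral_of_dominated_loc_of_deriv_le (μ := volume.restrict (Ioi (0:ℝ)))
    (F := fun x t => Real.cosh t * Real.exp (-x * Real.cosh t))
    (F' := fun x t => Real.cosh t * (Real.exp (-x * Real.cosh t) * -Real.cosh t))
    (x₀ := s) (bound := fun t => Real.cosh t ^ 2 * Real.exp (-(s/2) * Real.cosh t))
    (Metric.ball_mem_nhds s (half_pos hs))
    (Filter.Eventually.of_forall fun x =>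
      (Real.continuous_cosh.mul
        (Real.continuous_exp.comp (continuous_const.mul Real.continuous_cosh))).aestronglyMeasurable)
    (by simpa using (integrable_pow_cosh_exp hs 1).integrable)
    ((Real.continuous_cosh.mul
      ((Real.continuous_exp.comp (continuous_const.mul Real.continuous_cosh)).mul
        Real.continuous_cosh.neg)).aestronglyMeasurable)
    ?_ (integrable_pow_cosh_exp (half_pos hs) 2) ?_
  · have h2 : (∫ t in Ioi (0:ℝ), Real.cosh t * (Real.exp (-s * Real.cosh t) * -Real.cosh t))
        = -besselK0₂ s := by
      rw [besselK0₂, ← integral_neg]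
      congr 1; ext t; ring
    rw [← h2]
    exact key.2
  · filter_upwards [ae_restrict_mem measurableSet_Ioi] with t ht x hx
    have hc : (0:ℝ) < Real.cosh t := Real.cosh_pos t
    have hx2 : s/2 < x := by
      have h := abs_lt.1 (mem_ball_iff_norm.1 hx); linarith [h.1]
    have hb : ‖Real.cosh t * (Real.exp (-x * Real.cosh t) * -Real.cosh t)‖
        = Real.cosh t ^ 2 * Real.exp (-x * Real.cosh t) := by
      rw [norm_mul, norm_mul, Real.norm_eq_abs, Real.norm_eq_abs, Real.norm_eq_abs,
        abs_of_nonneg hc.le, Real.abs_exp, abs_neg, abs_of_nonneg hc.le]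
      ring
    rw [hb]
    exact mul_le_mul_of_nonneg_left (Real.exp_le_exp.2 (by nlinarith)) (by positivity)
  · refine Filter.Eventually.of_forall fun t x _ => ?_
    exact (((hasDerivAt_neg' x).mul_const (Real.cosh t)).exp.const_mul
      (Real.cosh t)).congr_deriv (by ring)

lemma besselK0_parts {s : ℝ} (hs : 0 < s) :
    besselK0₁ s = s * (besselK0₂ s - besselK0 s) := by
  -- integration by parts: d/dt (sinh t * exp (-s cosh t))
  set f : ℝ → ℝ := fun t => Real.sinh t * Real.exp (-s * Real.cosh t) with hf
  set f' : ℝ → ℝ := fun t =>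
    Real.cosh t * Real.exp (-s * Real.cosh t) - s * (Real.sinh t ^ 2 * Real.exp (-s * Real.cosh t))
  have hderiv : ∀ t ∈ Ici (0:ℝ), HasDerivAt f (f' t) t := by
    intro t _
    have h1 : HasDerivAt (fun t => Real.exp (-s * Real.cosh t))
        (Real.exp (-s * Real.cosh t) * (-s * Real.sinh t)) t :=
      ((Real.hasDerivAt_cosh t).const_mul (-s)).exp
    exact ((Real.hasDerivAt_sinh t).mul h1).congr_deriv (by simp [f']; ring)
  have hint : IntegrableOn f' (Ioi (0:ℝ)) := by
    apply Integrable.sub (by simpa using (integrable_pow_cosh_exp hs 1).integrable)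
    exact (integrable_sinh_sq_exp_cosh hs).const_mul s
  have htend : Tendsto f atTop (𝓝 0) := by
    apply squeeze_zero' (g := fun t => (2 * 1 / s) ^ 1 * Real.exp (-(s/2) * t))
    · filter_upwards [eventually_ge_atTop (0:ℝ)] with t ht
      positivity
    · filter_upwards [eventually_ge_atTop (0:ℝ)] with t ht
      have h1 : Real.sinh t ≤ Real.cosh t := (Real.sinh_lt_cosh t).le
      have h2 := pow_cosh_exp_bound hs 1 ht
      simp only [pow_one] at h2 ⊢
      have : Real.sinh t * Real.exp (-s * Real.cosh t)
          ≤ Real.cosh t * Real.exp (-s * Real.cosh t) :=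
        mul_le_mul_of_nonneg_right h1 (Real.exp_pos _).le
      exact le_trans this (by simpa using h2)
    · have h1 : Tendsto (fun t : ℝ => -(s/2) * t) atTop atBot := by
        apply Tendsto.const_mul_atTop_of_neg (by linarith : -(s/2) < 0) tendsto_id
      have := (Real.tendsto_exp_atBot.comp h1).const_mul ((2 * 1 / s) ^ 1)
      simpa using this
  have key := integral_Ioi_of_hasDerivAt_of_tendsto' hderiv hint htend
  have hf0 : f 0 = 0 := by simp [f]
  rw [hf0, sub_zero] at key
  -- key : ∫ f' = 0
  have hsplit : (∫ t in Ioi (0:ℝ), f' t)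
      = besselK0₁ s - s * ∫ t in Ioi (0:ℝ), Real.sinh t ^ 2 * Real.exp (-s * Real.cosh t) := by
    rw [integral_sub (by simpa using (integrable_pow_cosh_exp hs 1).integrable)
      ((integrable_sinh_sq_exp_cosh hs).const_mul s), integral_const_mul]
    rfl
  have hsinh : (∫ t in Ioi (0:ℝ), Real.sinh t ^ 2 * Real.exp (-s * Real.cosh t))
      = besselK0₂ s - besselK0 s := by
    rw [besselK0₂, besselK0, ← integral_sub (by simpa using (integrable_pow_cosh_exp hs 2).integrable)
      (integrable_exp_cosh hs)]
    congr 1; ext t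
    rw [Real.sinh_sq]; ring
  rw [hsplit, hsinh] at key
  linarith

lemma phi_hasDerivAt {z : ℝ} (hz : 0 < z) :
    HasDerivAt (fun z => besselK0 (Real.sqrt z))
      (-besselK0₁ (Real.sqrt z) * (1 / (2 * Real.sqrt z))) z := by
  have hs : 0 < Real.sqrt z := Real.sqrt_pos.2 hz
  exact (hasDerivAt_besselK0 hs).comp z (Real.hasDerivAt_sqrt hz.ne')

theorem stmt_2 :
    let φ : ℝ → ℝ := fun z => besselK0 (Real.sqrt z)
    ∀ z > (0:ℝ), z * deriv (deriv φ) z + deriv φ z - (1/4) * φ z = 0 := by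
  intro φ z hz
  set s := Real.sqrt z with hsdef
  have hs : 0 < s := Real.sqrt_pos.2 hz
  have hs2 : s ^ 2 = z := Real.sq_sqrt hz.le
  -- first derivative
  have hd1 : deriv φ z = -besselK0₁ s * (1 / (2 * s)) := (phi_hasDerivAt hz).deriv
  -- eventual formula for deriv φ
  have hev : deriv φ =ᶠ[𝓝 z] fun w => -besselK0₁ (Real.sqrt w) * (1 / (2 * Real.sqrt w)) := by
    filter_upwards [Ioi_mem_nhds hz] with w hw
    exact (phi_hasDerivAt hw).deriv
  -- derivative of the formula
  have h1 : HasDerivAt (fun w => -besselK0₁ (Real.sqrt w))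
      (-(-besselK0₂ s * (1 / (2 * s)))) z :=
    (((hasDerivAt_besselK0₁ hs).comp z (Real.hasDerivAt_sqrt hz.ne'))).neg
  have h2s : HasDerivAt (fun w => 2 * Real.sqrt w) (2 * (1 / (2 * s))) z :=
    (Real.hasDerivAt_sqrt hz.ne').const_mul 2
  have h2 : HasDerivAt (fun w => 1 / (2 * Real.sqrt w))
      (-(2 * (1 / (2 * s))) / (2 * s) ^ 2) z := by
    have h2i : HasDerivAt (fun w => (2 * Real.sqrt w)⁻¹) (-(2 * (1 / (2 * s))) / (2 * s) ^ 2) z := by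
      have := h2s.inv (by positivity)
      rw [← hsdef] at this
      exact this
    simpa only [one_div] using h2i
  have hmul : HasDerivAt (fun w => -besselK0₁ (Real.sqrt w) * (1 / (2 * Real.sqrt w)))
      (-(-besselK0₂ s * (1 / (2 * s))) * (1 / (2 * s))
        + -besselK0₁ s * (-(2 * (1 / (2 * s))) / (2 * s) ^ 2)) z := h1.mul h2
  have hd2 : deriv (deriv φ) z
      = -(-besselK0₂ s * (1 / (2 * s))) * (1 / (2 * s))
        + -besselK0₁ s * (-(2 * (1 / (2 * s))) / (2 * s) ^ 2) := by
    rw [hev.deriv_eq]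
    exact hmul.deriv
  have hparts := besselK0_parts hs
  have hφ : φ z = besselK0 s := rfl
  rw [hd1, hd2, hφ, hparts, ← hs2]
  have hsne : s ≠ 0 := hs.ne'
  field_simp
  ring
end

section
/- For real numbers r > 0, c < cosh r, and n ≥ 1 a natural number, ∫_r^∞ (cosh ρ − c)^{−(n+2)/2}·(cosh ρ − cosh r)^{−1/2}·sinh ρ dρ = (cosh r − c)^{−(n+1)/2}·B(1/2, (n+1)/2). -/
open Real Set MeasureTheory

/-- The Euler Beta function. -/
noncomputable def betaFn (x y : ℝ) : ℝ := Real.Gamma x * Real.Gamma y / Real.Gamma (x + y)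

lemma betaFn_eq_integral {a b : ℝ} (ha : 0 < a) (hb : 0 < b) :
    ∫ x in Ioo (0:ℝ) 1, x ^ (a - 1) * (1 - x) ^ (b - 1) = betaFn a b := by
  have key := Complex.Gamma_mul_Gamma_eq_betaIntegral (s := (a:ℂ)) (t := (b:ℂ))
    (by simpa using ha) (by simpa using hb)
  have hI : Complex.betaIntegral (a:ℂ) (b:ℂ)
      = ((∫ x in Ioo (0:ℝ) 1, x ^ (a - 1) * (1 - x) ^ (b - 1) : ℝ) : ℂ) := by
    rw [Complex.betaIntegral, intervalIntegral.integral_of_le zero_le_one,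
      MeasureTheory.integral_Ioc_eq_integral_Ioo]
    calc ∫ (x : ℝ) in Ioo 0 1, (x:ℂ) ^ ((a:ℂ) - 1) * (1 - (x:ℂ)) ^ ((b:ℂ) - 1)
        = ∫ (x : ℝ) in Ioo 0 1, ((x ^ (a - 1) * (1 - x) ^ (b - 1) : ℝ) : ℂ) := by
          refine setIntegral_congr_fun measurableSet_Ioo (fun x hx => ?_)
          rw [show ((a:ℂ) - 1) = ((a - 1 : ℝ) : ℂ) by push_cast; ring,
            show ((b:ℂ) - 1) = ((b - 1 : ℝ) : ℂ) by push_cast; ring,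
            show (1 - (x:ℂ)) = ((1 - x : ℝ) : ℂ) by push_cast; ring,
            ← Complex.ofReal_cpow hx.1.le,
            ← Complex.ofReal_cpow (by linarith [hx.2] : (0:ℝ) ≤ 1 - x),
            ← Complex.ofReal_mul]
      _ = _ := integral_ofReal
  rw [hI, Complex.Gamma_ofReal, Complex.Gamma_ofReal,
    show ((a:ℂ) + (b:ℂ)) = ((a+b:ℝ):ℂ) by push_cast; ring,
    Complex.Gamma_ofReal, ← Complex.ofReal_mul, ← Complex.ofReal_mul] at key
  have h2 := Complex.ofReal_inj.mp key
  have hg : Real.Gamma (a + b) ≠ 0 := (Real.Gamma_pos_of_pos (by linarith)).ne'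
  rw [betaFn]
  field_simp
  linarith [h2]

theorem stmt_5 (r c : ℝ) (hr : 0 < r) (hc : c < Real.cosh r) (n : ℕ) (hn : 1 ≤ n) :
    ∫ ρ in Ioi r,
        (Real.cosh ρ - c) ^ (-((n:ℝ) + 2) / 2) *
          (Real.cosh ρ - Real.cosh r) ^ (-(1:ℝ) / 2) * Real.sinh ρ
      = (Real.cosh r - c) ^ (-((n:ℝ) + 1) / 2) * betaFn (1/2) (((n:ℝ) + 1) / 2) := by
  set b := Real.cosh r with hb
  set d := Real.cosh r - c with hdd
  have hd : 0 < d := by rw [hdd]; linarith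
  set f : ℝ → ℝ := fun ρ => (Real.cosh ρ - b) / (Real.cosh ρ - c) with hf
  set f' : ℝ → ℝ := fun ρ => Real.sinh ρ * d / (Real.cosh ρ - c)^2 with hf'
  -- basic facts for ρ > r
  have hBpos : ∀ ρ ∈ Ioi r, 0 < Real.cosh ρ - b := by
    intro ρ hρ
    have : b < Real.cosh ρ := by
      rw [hb, Real.cosh_lt_cosh, abs_of_pos hr, abs_of_pos (hr.trans hρ)]
      exact hρ
    linarith
  have hApos : ∀ ρ ∈ Ioi r, 0 < Real.cosh ρ - c := fun ρ hρ => by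
    have := hBpos ρ hρ
    have hd' := hd
    rw [hdd] at hd'
    rw [hb] at this
    linarith
  have hspos : ∀ ρ ∈ Ioi r, 0 < Real.sinh ρ := fun ρ hρ =>
    Real.sinh_pos_iff.mpr (hr.trans hρ)
  -- derivative
  have hderiv : ∀ ρ ∈ Ioi r, HasDerivWithinAt f (f' ρ) (Ioi r) ρ := by
    intro ρ hρ
    have hA := hApos ρ hρ
    have H : HasDerivAt f (f' ρ) ρ := by
      have := (((Real.hasDerivAt_cosh ρ).sub_const b).div
        ((Real.hasDerivAt_cosh ρ).sub_const c) hA.ne')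
      refine this.congr_deriv ?_
      simp only [hf', hdd, hb]
      ring
    exact H.hasDerivWithinAt
  -- injectivity
  have hinj : InjOn f (Ioi r) := by
    intro ρ₁ h₁ ρ₂ h₂ hfe
    have hA1 := hApos ρ₁ h₁; have hA2 := hApos ρ₂ h₂
    rw [hf] at hfe
    have hE : (Real.cosh ρ₁ - b) * (Real.cosh ρ₂ - c)
        = (Real.cosh ρ₂ - b) * (Real.cosh ρ₁ - c) :=
      (div_eq_div_iff hA1.ne' hA2.ne').mp hfe
    have hcc : Real.cosh ρ₁ = Real.cosh ρ₂ := by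
      have h3 : (b - c) * Real.cosh ρ₁ = (b - c) * Real.cosh ρ₂ := by
        linear_combination hE
      have hbc : b - c ≠ 0 := by rw [hb]; linarith
      exact mul_left_cancel₀ hbc h3
    exact Real.cosh_strictMonoOn.injOn (le_of_lt (hr.trans h₁))
      (le_of_lt (hr.trans h₂)) hcc
  -- image
  have himage : f '' Ioi r = Ioo 0 1 := by
    ext x
    constructor
    · rintro ⟨ρ, hρ, rfl⟩
      have hA := hApos ρ hρ; have hB := hBpos ρ hρ
      constructor
      · exact div_pos hB hA
      · rw [hf]
        rw [div_lt_one hA]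
        have : c < b := hc
        linarith
    · intro hx
      obtain ⟨hx0, hx1⟩ := hx
      have h1x : 0 < 1 - x := by linarith
      set σ : ℝ := (b - c * x) / (1 - x) with hσ
      have hσb : b < σ := by
        rw [hσ, lt_div_iff₀ h1x]
        nlinarith
      have hcosh_tendsto : Filter.Tendsto Real.cosh Filter.atTop Filter.atTop := by
        apply Filter.tendsto_atTop_mono (f := fun x => Real.exp x / 2)
        · intro x
          rw [Real.cosh_eq]
          have := Real.exp_pos (-x)
          linarith
        · exact Real.tendsto_exp_atTop.atTop_div_const two_pos
      have hsurj : Ioi b ⊆ Real.cosh '' Ici r := by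
        refine Ioi_subset_Ici_self.trans ?_
        exact IsPreconnected.intermediate_value_Ici isPreconnected_Ici self_mem_Ici
          (Filter.le_principal_iff.mpr (Filter.Ici_mem_atTop _))
          Real.continuous_cosh.continuousOn hcosh_tendsto
      obtain ⟨ρ, hρ, hcρ⟩ := hsurj hσb
      have hρr : ρ ∈ Ioi r := by
        rcases eq_or_lt_of_le (mem_Ici.mp hρ) with h | h
        · exfalso
          rw [← h] at hcρ
          rw [← hb] at hcρ
          linarith [hσb]
        · exact h
      refine ⟨ρ, hρr, ?_⟩
      have hσc : 0 < σ - c := by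
        have hd' := hd
        rw [hdd, ← hb] at hd'
        linarith
      have key : σ - b = x * (σ - c) := by
        rw [hσ]
        field_simp
        ring
      rw [hf]
      simp only [hcρ, key]
      rw [mul_div_assoc, div_self hσc.ne', mul_one]
  -- change of variables
  have hcov := MeasureTheory.integral_image_eq_integral_abs_deriv_smul measurableSet_Ioi
    hderiv hinj (fun x => x ^ ((1:ℝ)/2 - 1) * (1 - x) ^ ((((n:ℝ)+1)/2) - 1))
  rw [himage] at hcov
  have hbeta : ∫ x in Ioo (0:ℝ) 1, x ^ ((1:ℝ)/2 - 1) * (1 - x) ^ ((((n:ℝ)+1)/2) - 1)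
      = betaFn (1/2) (((n:ℝ)+1)/2) := by
    exact betaFn_eq_integral (by norm_num) (by positivity)
  -- pointwise identity
  have hpt : ∀ ρ ∈ Ioi r,
      |f' ρ| • ((f ρ) ^ ((1:ℝ)/2 - 1) * (1 - f ρ) ^ ((((n:ℝ)+1)/2) - 1))
      = d ^ (((n:ℝ)+1)/2) *
        ((Real.cosh ρ - c) ^ (-((n:ℝ) + 2) / 2) *
          (Real.cosh ρ - Real.cosh r) ^ (-(1:ℝ) / 2) * Real.sinh ρ) := by
    intro ρ hρ
    have hA := hApos ρ hρ; have hB := hBpos ρ hρ; have hs := hspos ρ hρ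
    have hf'pos : 0 < f' ρ := by
      rw [hf']
      positivity
    rw [smul_eq_mul, abs_of_pos hf'pos, hf, hf']
    have h1f : 1 - (Real.cosh ρ - b) / (Real.cosh ρ - c) = d / (Real.cosh ρ - c) := by
      rw [hdd, hb]
      field_simp
      ring
    simp only
    rw [h1f, Real.div_rpow hB.le hA.le, Real.div_rpow hd.le hA.le]
    rw [← hb]
    set A := Real.cosh ρ - c
    set B := Real.cosh ρ - b
    set u : ℝ := (1:ℝ)/2 - 1 with hu
    set v : ℝ := ((n:ℝ)+1)/2 with hv
    calc Real.sinh ρ * d / A^2 * (B^u / A^u * (d^(v-1) / A^(v-1)))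
        = Real.sinh ρ * ((d ^ (1:ℝ) * d^(v-1)) * ((A^(-(2:ℝ)) * A^(-u) * A^(-(v-1))) * B^u)) := by
          rw [show (A^2 : ℝ) = A ^ (2:ℝ) by rw [← Real.rpow_natCast A 2]; norm_num]
          rw [div_eq_mul_inv, div_eq_mul_inv, div_eq_mul_inv,
            ← Real.rpow_neg hA.le, ← Real.rpow_neg hA.le, ← Real.rpow_neg hA.le,
            Real.rpow_one]
          ring
      _ = Real.sinh ρ * (d ^ ((1:ℝ) + (v-1)) * (A ^ (-(2:ℝ) + -u + -(v-1)) * B^u)) := by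
          rw [← Real.rpow_add hd, ← Real.rpow_add hA, ← Real.rpow_add hA]
      _ = d ^ v * (A ^ (-((n:ℝ) + 2) / 2) * B ^ (-(1:ℝ) / 2) * Real.sinh ρ) := by
          rw [show (1:ℝ) + (v-1) = v by ring,
            show -(2:ℝ) + -u + -(v-1) = -((n:ℝ) + 2) / 2 by rw [hu, hv]; ring,
            show u = -(1:ℝ)/2 by rw [hu]; ring]
          ring
  have h1 : betaFn (1/2) (((n:ℝ)+1)/2)
      = d ^ (((n:ℝ)+1)/2) * ∫ ρ in Ioi r,
          (Real.cosh ρ - c) ^ (-((n:ℝ) + 2) / 2) *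
            (Real.cosh ρ - Real.cosh r) ^ (-(1:ℝ) / 2) * Real.sinh ρ := by
    rw [← hbeta, hcov, ← MeasureTheory.integral_const_mul]
    exact setIntegral_congr_fun measurableSet_Ioi hpt
  rw [show -((n:ℝ) + 1) / 2 = -(((n:ℝ)+1)/2) by ring, Real.rpow_neg hd.le, h1,
    ← mul_assoc, inv_mul_cancel₀ (Real.rpow_pos_of_pos hd _).ne', one_mul]
end

section
/- For every y > 0 and λ > 0, e^{−yλ}/y = (1/√π)·∫_0^∞ e^{−u·y²}·u^{−1/2}·e^{−λ²/(4u)} du. -/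
open Real Set MeasureTheory

private lemma glasser_aux (a b : ℝ) (ha : 0 < a) (hb : 0 < b) :
    ∫ t in Ioi (0:ℝ), (a + b / t ^ 2) * Real.exp (-(a * t - b / t) ^ 2) = Real.sqrt π := by
  have himg : (fun t : ℝ => a * t - b / t) '' Ioi 0 = univ := by
    apply eq_univ_of_forall
    intro x
    set r := Real.sqrt (x ^ 2 + 4 * a * b) with hr
    have hr2 : r ^ 2 = x ^ 2 + 4 * a * b := by
      rw [hr, sq_sqrt]; positivity
    have hrx : |x| < r := by
      have h1 : x ^ 2 < r ^ 2 := by rw [hr2]; nlinarith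
      have hrpos : 0 ≤ r := Real.sqrt_nonneg _
      nlinarith [abs_nonneg x, sq_abs x]
    set t := (x + r) / (2 * a) with ht
    have htpos : 0 < t := by
      have : 0 < x + r := by
        rcases abs_lt.mp hrx with ⟨h1, h2⟩; linarith
      positivity
    refine ⟨t, htpos, ?_⟩
    have ht0 : t ≠ 0 := ne_of_gt htpos
    have h2 : t * (2 * a) = x + r := by
      rw [ht]; field_simp
    have hr' : r = 2 * a * t - x := by linarith
    have hthis : (2 * a * t - x) ^ 2 = x ^ 2 + 4 * a * b := by rw [← hr']; exact hr2
    have h4 : a * (a * t ^ 2 - x * t - b) = 0 := by linear_combination hthis / 4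
    have hq : a * t ^ 2 - x * t - b = 0 := (mul_eq_zero.mp h4).resolve_left (ne_of_gt ha)
    show a * t - b / t = x
    field_simp
    nlinarith [hq]
  have hderiv : ∀ t ∈ Ioi (0:ℝ), HasDerivWithinAt (fun t : ℝ => a * t - b / t)
      (a + b / t ^ 2) (Ioi 0) t := by
    intro t ht
    have ht0 : t ≠ 0 := ne_of_gt ht
    have : HasDerivAt (fun t : ℝ => a * t - b / t) (a + b / t ^ 2) t := by
      have h1 : HasDerivAt (fun t : ℝ => a * t) a t := by
        simpa using (hasDerivAt_id t).const_mul a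
      have h2 : HasDerivAt (fun t : ℝ => b / t) (-b / t ^ 2) t := by
        simpa [div_eq_mul_inv] using (hasDerivAt_inv ht0).const_mul b
      have := h1.sub h2
      rw [show a + b / t ^ 2 = a - -b / t ^ 2 by ring]
      exact this
    exact this.hasDerivWithinAt
  have hinj : InjOn (fun t : ℝ => a * t - b / t) (Ioi 0) := by
    have : StrictMonoOn (fun t : ℝ => a * t - b / t) (Ioi 0) := by
      intro s hs t ht hst
      have hs0 : (0:ℝ) < s := hs
      have ht0 : (0:ℝ) < t := ht
      have h1 : a * s < a * t := by nlinarith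
      have h2 : b / t < b / s := div_lt_div_of_pos_left hb hs0 hst
      simp only
      linarith
    exact this.injOn
  have := MeasureTheory.integral_image_eq_integral_abs_deriv_smul measurableSet_Ioi hderiv hinj
    (fun x => Real.exp (-x ^ 2))
  rw [himg, Measure.restrict_univ] at this
  have hg : ∫ x : ℝ, Real.exp (-x ^ 2) = Real.sqrt π := by
    simpa using integral_gaussian 1
  rw [hg] at this
  rw [this]
  apply setIntegral_congr_fun measurableSet_Ioi
  intro t ht
  have ht0 : (0:ℝ) < t := ht
  have habs : |a + b / t ^ 2| = a + b / t ^ 2 := by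
    apply abs_of_pos; positivity
  simp [habs, smul_eq_mul]

private lemma glasser_cont (a b : ℝ) :
    ContinuousOn (fun t : ℝ => Real.exp (-(a * t - b / t) ^ 2)) (Ioi 0) := by
  apply Real.continuous_exp.comp_continuousOn
  apply ContinuousOn.neg
  apply ContinuousOn.pow
  exact (continuousOn_const.mul continuousOn_id).sub
    (continuousOn_const.div continuousOn_id (fun t ht => ne_of_gt ht))

private lemma glasser (a b : ℝ) (ha : 0 < a) (hb : 0 < b) :
    ∫ t in Ioi (0:ℝ), Real.exp (-(a * t - b / t) ^ 2) = Real.sqrt π / (2 * a) := by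
  set E : ℝ → ℝ := fun t => Real.exp (-(a * t - b / t) ^ 2) with hE
  have hderiv : ∀ t ∈ Ioi (0:ℝ), HasDerivWithinAt (fun t : ℝ => b / (a * t))
      (-(b / (a * t ^ 2))) (Ioi 0) t := by
    intro t ht
    have ht0 : t ≠ 0 := ne_of_gt ht
    have ha0 : a ≠ 0 := ne_of_gt ha
    have h : HasDerivAt (fun t : ℝ => b / (a * t)) (-(b / (a * t ^ 2))) t := by
      have h2 : HasDerivAt (fun s : ℝ => b / a * s⁻¹) (b / a * -(((t:ℝ) ^ 2)⁻¹)) t :=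
        (hasDerivAt_inv ht0).const_mul (b / a)
      have heq : (fun s : ℝ => b / (a * s)) = fun s : ℝ => b / a * s⁻¹ := by
        funext s; rw [div_mul_eq_div_div, div_eq_mul_inv]
      rw [heq]
      convert h2 using 1
      field_simp
    exact h.hasDerivWithinAt
  have himg : (fun t : ℝ => b / (a * t)) '' Ioi 0 = Ioi 0 := by
    apply Subset.antisymm
    · rintro x ⟨t, ht, rfl⟩
      have : (0:ℝ) < t := ht
      exact mem_Ioi.mpr (by positivity)
    · intro x hx
      have hx0 : (0:ℝ) < x := hx
      refine ⟨b / (a * x), mem_Ioi.mpr (by positivity), ?_⟩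
      show b / (a * (b / (a * x))) = x
      field_simp
  have hinj : InjOn (fun t : ℝ => b / (a * t)) (Ioi 0) := by
    have : StrictAntiOn (fun t : ℝ => b / (a * t)) (Ioi 0) := by
      intro s hs t ht hst
      have hs0 : (0:ℝ) < s := hs
      have ht0 : (0:ℝ) < t := ht
      apply div_lt_div_of_pos_left hb (by positivity)
      nlinarith
    exact this.injOn
  have hsub := MeasureTheory.integral_image_eq_integral_abs_deriv_smul measurableSet_Ioi hderiv hinj E
  rw [himg] at hsub
  have hsub2 : ∫ t in Ioi (0:ℝ), E t
      = ∫ t in Ioi (0:ℝ), (b / (a * t ^ 2)) * E t := by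
    rw [hsub]
    apply setIntegral_congr_fun measurableSet_Ioi
    intro t ht
    have ht0 : (0:ℝ) < t := ht
    have habs : |(-(b / (a * t ^ 2)))| = b / (a * t ^ 2) := by
      rw [abs_neg]; apply abs_of_pos; positivity
    have harg : a * (b / (a * t)) - b / (b / (a * t)) = -(a * t - b / t) := by
      field_simp
      ring
    simp only [hE, smul_eq_mul, habs, harg, neg_sq]
  have hkey := glasser_aux a b ha hb
  have hintsum : IntegrableOn (fun t : ℝ => (a + b / t ^ 2) * E t) (Ioi 0) := by
    by_contra hcon
    rw [integral_undef hcon] at hkey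
    have : (0:ℝ) < Real.sqrt π := Real.sqrt_pos.mpr Real.pi_pos
    linarith
  have hEc := glasser_cont a b
  have hint1 : IntegrableOn (fun t : ℝ => a * E t) (Ioi 0) := by
    apply Integrable.mono' hintsum
    · exact (continuousOn_const.mul hEc).aestronglyMeasurable measurableSet_Ioi
    · filter_upwards [ae_restrict_mem measurableSet_Ioi] with t ht
      have ht0 : (0:ℝ) < t := ht
      have hEpos : 0 < E t := Real.exp_pos _
      rw [Real.norm_eq_abs, abs_of_nonneg (by positivity)]
      have h2 : 0 ≤ b / t ^ 2 * E t := by positivity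
      nlinarith
  have hint2 : IntegrableOn (fun t : ℝ => (b / t ^ 2) * E t) (Ioi 0) := by
    apply Integrable.mono' hintsum
    · exact ((continuousOn_const.div (continuousOn_id.pow 2)
        (fun t ht => pow_ne_zero 2 (ne_of_gt (show (0:ℝ) < t from ht)))).mul hEc).aestronglyMeasurable
        measurableSet_Ioi
    · filter_upwards [ae_restrict_mem measurableSet_Ioi] with t ht
      have ht0 : (0:ℝ) < t := ht
      have hEpos : 0 < E t := Real.exp_pos _
      rw [Real.norm_eq_abs, abs_of_nonneg (by positivity)]
      nlinarith
  have hsplit : ∫ t in Ioi (0:ℝ), (a + b / t ^ 2) * E t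
      = (∫ t in Ioi (0:ℝ), a * E t) + ∫ t in Ioi (0:ℝ), (b / t ^ 2) * E t := by
    rw [← integral_add hint1 hint2]
    apply setIntegral_congr_fun measurableSet_Ioi
    intro t ht
    ring
  have h1 : ∫ t in Ioi (0:ℝ), a * E t = a * ∫ t in Ioi (0:ℝ), E t :=
    MeasureTheory.integral_const_mul a E
  have h2 : ∫ t in Ioi (0:ℝ), (b / t ^ 2) * E t = a * ∫ t in Ioi (0:ℝ), E t := by
    rw [hsub2, ← MeasureTheory.integral_const_mul]
    apply setIntegral_congr_fun measurableSet_Ioi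
    intro t ht
    have ht0 : (0:ℝ) < t := ht
    have ha0 : a ≠ 0 := ne_of_gt ha
    field_simp
  rw [hsplit, h1, h2] at hkey
  have ha0 : (2 * a) ≠ 0 := by positivity
  field_simp
  linarith

theorem stmt_7 (y lam : ℝ) (hy : 0 < y) (hlam : 0 < lam) :
    Real.exp (-y * lam) / y
      = (1 / Real.sqrt π) *
        ∫ u in Ioi (0:ℝ), Real.exp (-u * y ^ 2) * u ^ (-(1:ℝ) / 2) * Real.exp (-lam ^ 2 / (4 * u)) := by
  have hπ : (0:ℝ) < Real.sqrt π := Real.sqrt_pos.mpr Real.pi_pos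
  -- change of variables u = t^2
  have hderiv : ∀ t ∈ Ioi (0:ℝ), HasDerivWithinAt (fun t : ℝ => t ^ 2) (2 * t) (Ioi 0) t := by
    intro t ht
    simpa using (hasDerivAt_pow 2 t).hasDerivWithinAt
  have hinj : InjOn (fun t : ℝ => t ^ 2) (Ioi 0) := by
    have : StrictMonoOn (fun t : ℝ => t ^ 2) (Ioi 0) := by
      intro s hs t ht hst
      have hs0 : (0:ℝ) < s := hs
      simp only
      nlinarith
    exact this.injOn
  have himg : (fun t : ℝ => t ^ 2) '' Ioi 0 = Ioi 0 := by
    apply Subset.antisymm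
    · rintro x ⟨t, ht, rfl⟩
      have : (0:ℝ) < t := ht
      exact mem_Ioi.mpr (by positivity)
    · intro x hx
      have hx0 : (0:ℝ) < x := hx
      exact ⟨Real.sqrt x, mem_Ioi.mpr (Real.sqrt_pos.mpr hx0), Real.sq_sqrt hx0.le⟩
  have hcov := MeasureTheory.integral_image_eq_integral_abs_deriv_smul measurableSet_Ioi hderiv hinj
    (fun u => Real.exp (-u * y ^ 2) * u ^ (-(1:ℝ) / 2) * Real.exp (-lam ^ 2 / (4 * u)))
  rw [himg] at hcov
  have hpt : ∀ t ∈ Ioi (0:ℝ),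
      |2 * t| • (Real.exp (-(t ^ 2) * y ^ 2) * (t ^ 2 : ℝ) ^ (-(1:ℝ) / 2)
        * Real.exp (-lam ^ 2 / (4 * t ^ 2)))
      = (2 * Real.exp (-y * lam)) * Real.exp (-(y * t - (lam / 2) / t) ^ 2) := by
    intro t ht
    have ht0 : (0:ℝ) < t := ht
    have habs : |2 * t| = 2 * t := abs_of_pos (by positivity)
    have hrpow : (t ^ 2 : ℝ) ^ (-(1:ℝ) / 2) = t⁻¹ := by
      rw [← Real.rpow_natCast t 2, ← Real.rpow_mul ht0.le,
        show ((2:ℕ):ℝ) * (-(1:ℝ) / 2) = -1 by norm_num, Real.rpow_neg_one]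
    have hexp : Real.exp (-(t ^ 2) * y ^ 2) * Real.exp (-lam ^ 2 / (4 * t ^ 2))
        = Real.exp (-y * lam) * Real.exp (-(y * t - (lam / 2) / t) ^ 2) := by
      rw [← Real.exp_add, ← Real.exp_add]
      congr 1
      field_simp
      ring
    rw [smul_eq_mul, habs, hrpow]
    have ht1 : t * t⁻¹ = 1 := mul_inv_cancel₀ (ne_of_gt ht0)
    calc 2 * t * (Real.exp (-(t ^ 2) * y ^ 2) * t⁻¹ * Real.exp (-lam ^ 2 / (4 * t ^ 2)))
        = 2 * (t * t⁻¹) * (Real.exp (-(t ^ 2) * y ^ 2) * Real.exp (-lam ^ 2 / (4 * t ^ 2))) := by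
          ring
      _ = 2 * (Real.exp (-y * lam) * Real.exp (-(y * t - (lam / 2) / t) ^ 2)) := by
          rw [ht1, hexp]; ring
      _ = (2 * Real.exp (-y * lam)) * Real.exp (-(y * t - (lam / 2) / t) ^ 2) := by ring
  have hmain : ∫ u in Ioi (0:ℝ), Real.exp (-u * y ^ 2) * u ^ (-(1:ℝ) / 2)
      * Real.exp (-lam ^ 2 / (4 * u))
      = (2 * Real.exp (-y * lam)) * ∫ t in Ioi (0:ℝ), Real.exp (-(y * t - (lam / 2) / t) ^ 2) := by
    rw [hcov, ← MeasureTheory.integral_const_mul]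
    exact setIntegral_congr_fun measurableSet_Ioi hpt
  rw [hmain, glasser y (lam / 2) hy (by positivity)]
  have hy0 : y ≠ 0 := ne_of_gt hy
  have hπ0 : Real.sqrt π ≠ 0 := ne_of_gt hπ
  field_simp
end
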